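/- Let X be an n×n complex matrix such that there exist b, γ > 0 with |X_{jk}| ≤ b e^{-γ|j-k|} for all j,k (quasidiagonal), and similarly Y with the same constants. Then for any 0 < γ' < γ, there exists b' > 0 depending only on b, γ, γ' (and not on n) such that |(XY)_{jk}| ≤ b' e^{-γ'|j-k|} for all j,k. -/

import Mathlib

open Finset

lemma geom_range_le {r : ℝ} (h0 : 0 ≤ r) (h1 : r < 1) (n : ℕ) :
    ∑ i ∈ Finset.range n, r ^ i ≤ (1 - r)⁻¹ := by
  rw [← tsum_geometric_of_lt_one h0 h1]
  exact Summable.sum_le_tsum _ (fun i _ => pow_nonneg h0 i) (summable_geometric_of_lt_one h0 h1)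

lemma two_sided_geom {r : ℝ} (h0 : 0 ≤ r) (h1 : r < 1) (N j : ℕ) :
    ∑ l ∈ Finset.range N, r ^ ((j : ℤ) - (l : ℤ)).natAbs ≤ 2 * (1 - r)⁻¹ := by
  rw [← Finset.sum_filter_add_sum_filter_not (Finset.range N) (· ≤ j)]
  have h₁ : ∑ l ∈ (Finset.range N).filter (· ≤ j), r ^ ((j : ℤ) - (l : ℤ)).natAbs
      ≤ (1 - r)⁻¹ := by
    calc ∑ l ∈ (Finset.range N).filter (· ≤ j), r ^ ((j : ℤ) - (l : ℤ)).natAbs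
        = ∑ l ∈ (Finset.range N).filter (· ≤ j), r ^ (j - l) := by
          apply Finset.sum_congr rfl
          intro l hl
          simp only [Finset.mem_filter] at hl
          congr 1
          omega
      _ ≤ ∑ l ∈ Finset.range (j + 1), r ^ (j - l) := by
          apply Finset.sum_le_sum_of_subset_of_nonneg
          · intro l hl
            simp only [Finset.mem_filter, Finset.mem_range] at hl ⊢
            omega
          · intro l _ _
            exact pow_nonneg h0 _
      _ = ∑ i ∈ Finset.range (j + 1), r ^ i := by
          rw [← Finset.sum_range_reflect]
          apply Finset.sum_congr rfl
          intro i hi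
          simp only [Finset.mem_range] at hi
          congr 1
          omega
      _ ≤ (1 - r)⁻¹ := geom_range_le h0 h1 _
  have h₂ : ∑ l ∈ (Finset.range N).filter (fun l => ¬ (l ≤ j)), r ^ ((j : ℤ) - (l : ℤ)).natAbs
      ≤ (1 - r)⁻¹ := by
    have hset : (Finset.range N).filter (fun l => ¬ (l ≤ j)) = Finset.Ico (j + 1) N := by
      ext l
      simp only [Finset.mem_filter, Finset.mem_range, Finset.mem_Ico]
      omega
    rw [hset]
    calc ∑ l ∈ Finset.Ico (j + 1) N, r ^ ((j : ℤ) - (l : ℤ)).natAbs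
        = ∑ m ∈ Finset.range (N - (j + 1)), r ^ (m + 1) := by
          rw [Finset.sum_Ico_eq_sum_range]
          apply Finset.sum_congr rfl
          intro m _
          congr 1
          omega
      _ ≤ ∑ m ∈ Finset.range (N - (j + 1)), r ^ m := by
          apply Finset.sum_le_sum
          intro m _
          exact pow_le_pow_of_le_one h0 h1.le (Nat.le_succ m)
      _ ≤ (1 - r)⁻¹ := geom_range_le h0 h1 _
  linarith

lemma exp_decay_sum_le {δ : ℝ} (hδ : 0 < δ) (N j : ℕ) :
    ∑ l : Fin N, Real.exp (-δ * |(j : ℝ) - (l : ℝ)|) ≤ 2 * (1 - Real.exp (-δ))⁻¹ := by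
  set r := Real.exp (-δ) with hr
  have h0 : 0 ≤ r := (Real.exp_pos _).le
  have h1 : r < 1 := by
    rw [hr, Real.exp_lt_one_iff]
    linarith
  have key : ∀ l : Fin N, Real.exp (-δ * |(j : ℝ) - (l : ℝ)|)
      = r ^ ((j : ℤ) - (l : ℤ)).natAbs := by
    intro l
    have habs : |(j : ℝ) - ((l : ℕ) : ℝ)| = (((j : ℤ) - (l : ℤ)).natAbs : ℝ) := by
      rw [Nat.cast_natAbs]
      push_cast
      rfl
    rw [habs, ← Real.exp_nat_mul]
    ring_nf
  calc ∑ l : Fin N, Real.exp (-δ * |(j : ℝ) - (l : ℝ)|)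
      = ∑ l : Fin N, r ^ ((j : ℤ) - (l : ℤ)).natAbs := by
        exact Finset.sum_congr rfl (fun l _ => key l)
    _ = ∑ l ∈ Finset.range N, r ^ ((j : ℤ) - (l : ℤ)).natAbs :=
        Fin.sum_univ_eq_sum_range (fun l : ℕ => r ^ ((j : ℤ) - (l : ℤ)).natAbs) N
    _ ≤ 2 * (1 - r)⁻¹ := two_sided_geom h0 h1 N j

/-- If `X` and `Y` are quasidiagonal with constants `b, γ` (i.e. `|X_{jk}| ≤ b e^{-γ|j-k|}`),
then for any `0 < γ' < γ` there is `b' > 0` depending only on `b, γ, γ'` (not on the matrix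
size) such that `|(XY)_{jk}| ≤ b' e^{-γ'|j-k|}`. -/
theorem stmt17 (b γ γ' : ℝ) (hb : 0 < b) (hγ' : 0 < γ') (hγ : γ' < γ) :
    ∃ b' : ℝ, 0 < b' ∧ ∀ (N : ℕ) (X Y : Matrix (Fin N) (Fin N) ℂ),
      (∀ j k, ‖X j k‖ ≤ b * Real.exp (-γ * |(j : ℝ) - (k : ℝ)|)) →
      (∀ j k, ‖Y j k‖ ≤ b * Real.exp (-γ * |(j : ℝ) - (k : ℝ)|)) →
      ∀ j k, ‖(X * Y) j k‖ ≤ b' * Real.exp (-γ' * |(j : ℝ) - (k : ℝ)|) := by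
  set δ := γ - γ' with hδdef
  have hδ : 0 < δ := by linarith
  have h1 : Real.exp (-δ) < 1 := by
    rw [Real.exp_lt_one_iff]; linarith
  set C := 2 * (1 - Real.exp (-δ))⁻¹ with hC
  have hCpos : 0 < C := by
    have : 0 < 1 - Real.exp (-δ) := by linarith
    positivity
  refine ⟨b * b * C, by positivity, ?_⟩
  intro N X Y hX hY j k
  rw [Matrix.mul_apply]
  calc ‖∑ l, X j l * Y l k‖
      ≤ ∑ l, ‖X j l * Y l k‖ := by
        exact norm_sum_le _ _
    _ ≤ ∑ l : Fin N, (b * b * Real.exp (-γ' * |(j : ℝ) - (k : ℝ)|))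
          * Real.exp (-δ * |(j : ℝ) - (l : ℝ)|) := by
        apply Finset.sum_le_sum
        intro l _
        rw [norm_mul]
        have hXb := hX j l
        have hYb := hY l k
        have hXa : 0 ≤ ‖X j l‖ := norm_nonneg _
        have hYa : 0 ≤ ‖Y l k‖ := norm_nonneg _
        have hmul : ‖X j l‖ * ‖Y l k‖
            ≤ (b * Real.exp (-γ * |(j : ℝ) - (l : ℝ)|)) *
              (b * Real.exp (-γ * |(l : ℝ) - (k : ℝ)|)) := by
          apply mul_le_mul hXb hYb hYa
          positivity
        refine hmul.trans ?_
        have hexp : Real.exp (-γ * |(j : ℝ) - (l : ℝ)|) * Real.exp (-γ * |(l : ℝ) - (k : ℝ)|)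
            ≤ Real.exp (-γ' * |(j : ℝ) - (k : ℝ)|) * Real.exp (-δ * |(j : ℝ) - (l : ℝ)|) := by
          rw [← Real.exp_add, ← Real.exp_add]
          apply Real.exp_le_exp.mpr
          have htri : |(j : ℝ) - (k : ℝ)| ≤ |(j : ℝ) - (l : ℝ)| + |(l : ℝ) - (k : ℝ)| := by
            have := abs_sub_le ((j : ℝ)) ((l : ℝ)) ((k : ℝ))
            linarith
          have h2 : 0 ≤ |(l : ℝ) - (k : ℝ)| := abs_nonneg _
          have h3 : 0 ≤ |(j : ℝ) - (l : ℝ)| := abs_nonneg _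
          nlinarith
        calc (b * Real.exp (-γ * |(j : ℝ) - (l : ℝ)|)) *
              (b * Real.exp (-γ * |(l : ℝ) - (k : ℝ)|))
            = b * b * (Real.exp (-γ * |(j : ℝ) - (l : ℝ)|) *
              Real.exp (-γ * |(l : ℝ) - (k : ℝ)|)) := by ring
          _ ≤ b * b * (Real.exp (-γ' * |(j : ℝ) - (k : ℝ)|) *
              Real.exp (-δ * |(j : ℝ) - (l : ℝ)|)) := by
              apply mul_le_mul_of_nonneg_left hexp (by positivity)
          _ = (b * b * Real.exp (-γ' * |(j : ℝ) - (k : ℝ)|)) *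
              Real.exp (-δ * |(j : ℝ) - (l : ℝ)|) := by ring
    _ = (b * b * Real.exp (-γ' * |(j : ℝ) - (k : ℝ)|))
          * ∑ l : Fin N, Real.exp (-δ * |(j : ℝ) - (l : ℝ)|) := by
        rw [Finset.mul_sum]
    _ ≤ (b * b * Real.exp (-γ' * |(j : ℝ) - (k : ℝ)|)) * C := by
        apply mul_le_mul_of_nonneg_left (exp_decay_sum_le hδ N (j : ℕ)) (by positivity)
    _ = b * b * C * Real.exp (-γ' * |(j : ℝ) - (k : ℝ)|) := by ring
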